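/- Let d > k be positive integers and suppose (c_1, …, c_k) ∈ E_{k,d}. Then for every 1 ≤ j ≤ k, one has (d−j)/j + ((d−j)/j)·(c_1 + ⋯ + c_{j−1}) − (c_j + ⋯ + c_k) ≥ 0. -/

import Mathlib

/-- `r 0, …, r (d-1)` is a listing of the roots (with multiplicity) of `q`,
sorted so that the absolute values are non-increasing. -/
def SortedRoots (d : ℕ) (q : Polynomial ℂ) (r : ℕ → ℂ) : Prop :=
  q.roots = (Multiset.range d).map r ∧
    ∀ i j : ℕ, i ≤ j → j < d → ‖r j‖ ≤ ‖r i‖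

/-- The set `E_{k,d}`: tuples `(c_1,…,c_k)` of nonnegative reals (here `c i` plays the
role of `c_{i+1}`) such that `|α_0| |α_1|^{c_1} ⋯ |α_k|^{c_k} ≥ 1` for every algebraic
integer `α` of degree `d`, i.e. for every sorted listing of the roots of every monic
irreducible integer polynomial of degree `d`. -/
def Ekd (k d : ℕ) : Set (Fin k → ℝ) :=
  {c | (∀ i, 0 ≤ c i) ∧
    ∀ (p : Polynomial ℤ) (r : ℕ → ℂ),
      p.Monic → Irreducible p → p.natDegree = d →
      SortedRoots d (p.map (Int.castRingHom ℂ)) r →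
      1 ≤ ‖r 0‖ * ∏ i : Fin k, ‖r (i.1 + 1)‖ ^ c i}

open Polynomial

/-- The complex absolute value, as an `AbsoluteValue` (removed from Mathlib). -/
noncomputable abbrev Complex.abs : AbsoluteValue ℂ ℝ := NormedField.toAbsoluteValue ℂ

@[simp] lemma Complex.abs_apply (z : ℂ) : Complex.abs z = ‖z‖ := rfl

/-- Any multiset of complexes of card `n` has a listing sorted by decreasing abs. -/
lemma exists_sorted_listing : ∀ (n : ℕ) (s : Multiset ℂ), Multiset.card s = n →
    ∃ r : ℕ → ℂ, s = (Multiset.range n).map r ∧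
      ∀ i j : ℕ, i ≤ j → j < n → Complex.abs (r j) ≤ Complex.abs (r i) := by
  intro n
  induction n with
  | zero =>
    intro s hs
    refine ⟨fun _ => 0, ?_, by omega⟩
    simp [Multiset.card_eq_zero.1 hs]
  | succ n ih =>
    intro s hs
    have hne : s.toList ≠ [] := by
      intro h
      have := congrArg List.length h
      simp [Multiset.length_toList, hs] at this
    obtain ⟨x, hx⟩ : ∃ x, x ∈ s.toList.argmin Complex.abs := by
      cases h : s.toList.argmin Complex.abs with
      | none => exact absurd (List.argmin_eq_none.1 h) hne
      | some x => exact ⟨x, rfl⟩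
    have hxs : x ∈ s := by
      rw [← Multiset.mem_toList]; exact List.argmin_mem hx
    have hmin : ∀ y ∈ s, Complex.abs x ≤ Complex.abs y := by
      intro y hy
      exact List.le_of_mem_argmin (Multiset.mem_toList.2 hy) hx
    set t := s.erase x with ht
    have hts : x ::ₘ t = s := Multiset.cons_erase hxs
    have htc : Multiset.card t = n := by
      have := congrArg Multiset.card hts
      simp at this; omega
    obtain ⟨r', hr1, hr2⟩ := ih t htc
    refine ⟨fun i => if i = n then x else r' i, ?_, ?_⟩
    · rw [Multiset.range_succ, Multiset.map_cons]
      simp only [if_pos rfl]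
      rw [← hts]
      congr 1
      rw [hr1]
      refine Multiset.map_congr rfl ?_
      intro i hi
      rw [Multiset.mem_range] at hi
      simp [Nat.ne_of_lt hi]
    · intro a b hab hb
      rcases Nat.lt_or_ge b n with hbn | hbn
      · have han : a < n := lt_of_le_of_lt hab hbn
        simp only [Nat.ne_of_lt hbn, Nat.ne_of_lt han, if_false]
        exact hr2 a b hab hbn
      · have hbn' : b = n := by omega
        rw [hbn']
        simp only [if_pos rfl]
        rcases Nat.lt_or_ge a n with han | han
        · simp only [Nat.ne_of_lt han, if_false]
          apply hmin
          rw [← hts, Multiset.mem_cons]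
          right
          rw [hr1]
          exact Multiset.mem_map.2 ⟨a, Multiset.mem_range.2 han, rfl⟩
        · have : a = n := by omega
          simp [this]

lemma sum_split {k : ℕ} (j : Fin k) (f : Fin k → ℝ) :
    ∑ i, f i = ∑ i ∈ Finset.Iio j, f i + ∑ i ∈ Finset.Ici j, f i := by
  rw [← Finset.sum_union]
  · congr 1
    ext x
    simp [lt_or_ge x j]
  · rw [Finset.disjoint_left]
    intro a ha hb
    simp only [Finset.mem_Iio] at ha
    simp only [Finset.mem_Ici] at hb
    exact absurd hb (not_le.2 ha)

noncomputable def myPoly (d e m : ℕ) : Polynomial ℤ :=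
  X ^ d - (C (2 * (m : ℤ)) * X ^ e + C 2)

section Poly

variable (d e m : ℕ)

lemma myPoly_lower_degree (hed : e < d) :
    (C (2 * (m : ℤ)) * X ^ e + C 2).degree < (X ^ d : Polynomial ℤ).degree := by
  rw [degree_X_pow]
  apply lt_of_le_of_lt (degree_add_le _ _)
  apply max_lt
  · exact lt_of_le_of_lt (degree_C_mul_X_pow_le e _) (by exact_mod_cast hed)
  · apply lt_of_le_of_lt degree_C_le
    exact_mod_cast (by omega : (0:ℕ) < d)

lemma myPoly_monic (hed : e < d) : (myPoly d e m).Monic := by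
  exact monic_X_pow_sub (by simpa [degree_X_pow] using myPoly_lower_degree d e m hed)

lemma myPoly_natDegree (hed : e < d) : (myPoly d e m).natDegree = d := by
  have h := degree_sub_eq_left_of_degree_lt (myPoly_lower_degree d e m hed)
  rw [degree_X_pow] at h
  exact natDegree_eq_of_degree_eq_some h

lemma myPoly_coeff_low (n : ℕ) (hn : n < d) :
    (myPoly d e m).coeff n = -(if n = e then 2 * (m:ℤ) else 0) - (if n = 0 then 2 else 0) := by
  simp only [myPoly, coeff_sub, coeff_add, coeff_X_pow, coeff_C_mul, coeff_C]
  rw [if_neg (Nat.ne_of_lt hn)]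
  split_ifs <;> ring

lemma myPoly_irreducible (hed : e < d) (he : 0 < e) : Irreducible (myPoly d e m) := by
  have hmonic := myPoly_monic d e m hed
  have hdeg := myPoly_natDegree d e m hed
  have hprime : (Ideal.span {(2:ℤ)}).IsPrime :=
    (Ideal.span_singleton_prime (by norm_num)).2 Int.prime_two
  refine Polynomial.IsEisensteinAt.irreducible ?_ hprime hmonic.isPrimitive (by omega)
  constructor
  · rw [hmonic.leadingCoeff]
    rw [Ideal.mem_span_singleton]
    norm_num
  · intro n hn
    rw [hdeg] at hn
    rw [myPoly_coeff_low d e m n hn, Ideal.mem_span_singleton]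
    split_ifs <;> simp <;> ring_nf <;> exact ⟨_, rfl⟩
  · have h0 : (myPoly d e m).coeff 0 = -2 := by
      rw [myPoly_coeff_low d e m 0 (by omega)]
      rw [if_neg (by omega), if_pos rfl]
      ring
    rw [h0, Ideal.span_singleton_pow, Ideal.mem_span_singleton]
    norm_num

end Poly

section Cx
variable {d e m : ℕ}

lemma myPolyC_eq :
    (myPoly d e m).map (Int.castRingHom ℂ)
      = X ^ d - (C (2 * (m : ℂ)) * X ^ e + C 2) := by
  simp only [myPoly, Polynomial.map_sub, Polynomial.map_add, Polynomial.map_mul,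
    Polynomial.map_pow, map_X, map_C]
  norm_num

lemma myPoly_root_eq {z : ℂ} (hz : ((myPoly d e m).map (Int.castRingHom ℂ)).IsRoot z) :
    z ^ d = 2 * (m:ℂ) * z ^ e + 2 := by
  have := hz
  rw [myPolyC_eq, IsRoot] at this
  simp only [eval_sub, eval_add, eval_mul, eval_pow, eval_C, eval_X, eval_ofNat,
    sub_eq_zero] at this
  exact this

variable {J : ℕ} {z : ℂ}

lemma root_abs_pos (hd : d = J + e) (hJ : 0 < J) (he : 0 < e)
    (hz : ((myPoly d e m).map (Int.castRingHom ℂ)).IsRoot z) : 0 < Complex.abs z := by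
  have heq := myPoly_root_eq hz
  have hz0 : z ≠ 0 := by
    rintro rfl
    rw [zero_pow (by omega), zero_pow (by omega)] at heq
    simp at heq
  exact AbsoluteValue.pos _ hz0

lemma abs2m (m : ℕ) : Complex.abs (2 * (m:ℂ)) = 2 * (m:ℝ) := by
  rw [map_mul]; simp

lemma root_h1 (hd : d = J + e)
    (hz : ((myPoly d e m).map (Int.castRingHom ℂ)).IsRoot z) :
    Complex.abs z ^ J * Complex.abs z ^ e ≤ 2 * (m:ℝ) * Complex.abs z ^ e + 2 := by
  have heq := myPoly_root_eq hz
  calc Complex.abs z ^ J * Complex.abs z ^ e = Complex.abs z ^ d := by rw [← pow_add, hd]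
    _ = Complex.abs (z ^ d) := by rw [map_pow]
    _ = Complex.abs (2 * (m:ℂ) * z ^ e + 2) := by rw [heq]
    _ ≤ Complex.abs (2 * (m:ℂ) * z ^ e) + Complex.abs 2 := AbsoluteValue.add_le _ _ _
    _ = 2 * (m:ℝ) * Complex.abs z ^ e + 2 := by
        rw [map_mul, abs2m, map_pow]; norm_num

lemma root_h2 (hd : d = J + e)
    (hz : ((myPoly d e m).map (Int.castRingHom ℂ)).IsRoot z) :
    2 ≤ Complex.abs z ^ J * Complex.abs z ^ e + 2 * (m:ℝ) * Complex.abs z ^ e := by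
  have heq := myPoly_root_eq hz
  have h2 : (2:ℂ) = z ^ d - 2 * (m:ℂ) * z ^ e := by rw [heq]; ring
  calc (2:ℝ) = Complex.abs (z ^ d - 2 * (m:ℂ) * z ^ e) := by rw [← h2]; norm_num
    _ ≤ Complex.abs (z ^ d) + Complex.abs (2 * (m:ℂ) * z ^ e) := by
        apply le_trans (AbsoluteValue.sub_le _ _ 0 _)
        simp
    _ = Complex.abs z ^ J * Complex.abs z ^ e + 2 * (m:ℝ) * Complex.abs z ^ e := by
        rw [map_pow, map_mul, abs2m, map_pow, ← pow_add, hd]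

lemma root_h3 (hd : d = J + e)
    (hz : ((myPoly d e m).map (Int.castRingHom ℂ)).IsRoot z) :
    Complex.abs z ^ e * (2 * (m:ℝ) - Complex.abs z ^ J) ≤ 2 := by
  have heq := myPoly_root_eq hz
  have hp : z ^ e * z ^ J = z ^ d := by rw [← pow_add]; congr 1; omega
  have h2 : z ^ e * (2 * (m:ℂ) - z ^ J) = -2 := by
    calc z ^ e * (2 * (m:ℂ) - z ^ J) = 2 * (m:ℂ) * z ^ e - z ^ e * z ^ J := by ring
      _ = 2 * (m:ℂ) * z ^ e - (2 * (m:ℂ) * z ^ e + 2) := by rw [hp, heq]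
      _ = -2 := by ring
  have h3 : Complex.abs z ^ e * Complex.abs (2 * (m:ℂ) - z ^ J) = 2 := by
    rw [← map_pow, ← map_mul, h2]
    norm_num
  calc Complex.abs z ^ e * (2 * (m:ℝ) - Complex.abs z ^ J)
      ≤ Complex.abs z ^ e * Complex.abs (2 * (m:ℂ) - z ^ J) := by
        apply mul_le_mul_of_nonneg_left _ (by positivity)
        calc 2 * (m:ℝ) - Complex.abs z ^ J
            = Complex.abs (2 * (m:ℂ)) - Complex.abs (z ^ J) := by rw [abs2m, map_pow]
          _ ≤ Complex.abs (2 * (m:ℂ) - z ^ J) := AbsoluteValue.le_sub _ _ _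
    _ = 2 := h3

end Cx

section G
variable {J e : ℕ} {x M : ℝ}

lemma G1 (hx : 0 < x) (hM : 1 ≤ M)
    (h1 : x ^ J * x ^ e ≤ 2 * M * x ^ e + 2) : x ^ J ≤ 2 * M + 2 := by
  rcases le_or_gt x 1 with h | h
  · have := pow_le_one₀ hx.le h (n := J)
    nlinarith
  · have hxe : 1 ≤ x ^ e := one_le_pow₀ h.le
    have hpos : 0 < x ^ e := by positivity
    have : x ^ J * x ^ e ≤ (2 * M + 2) * x ^ e := by nlinarith
    exact le_of_mul_le_mul_right this hpos

lemma G2 (hx : 0 < x) (hM : 1 ≤ M)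
    (h2 : 2 ≤ x ^ J * x ^ e + 2 * M * x ^ e) : 1 ≤ 2 * M * x ^ e := by
  rcases le_or_gt 1 x with h | h
  · have hxe : 1 ≤ x ^ e := one_le_pow₀ h
    nlinarith
  · have hxJ : x ^ J ≤ 1 := pow_le_one₀ hx.le h.le
    have hpos : 0 < x ^ e := by positivity
    nlinarith

lemma G3 (hx : 0 < x) (hM : 1 ≤ M)
    (h3 : x ^ e * (2 * M - x ^ J) ≤ 2) (h : 3 ≤ M * x ^ e) : M < x ^ J := by
  by_contra hc
  push_neg at hc
  have hpos : 0 < x ^ e := by positivity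
  nlinarith
end G

section Count

lemma prod_abs_roots (d e m : ℕ) (hed : e < d) (he : 0 < e) (r : ℕ → ℂ)
    (hroots : ((myPoly d e m).map (Int.castRingHom ℂ)).roots = (Multiset.range d).map r) :
    ∏ i ∈ Finset.range d, Complex.abs (r i) = 2 := by
  set F := (myPoly d e m).map (Int.castRingHom ℂ) with hF
  have hmonic : F.Monic := (myPoly_monic d e m hed).map _
  have hdeg : F.natDegree = d := by
    rw [hF, (myPoly_monic d e m hed).natDegree_map, myPoly_natDegree d e m hed]
  have hsp : Splits F := IsAlgClosed.splits F
  have hc0 : F.coeff 0 = -2 := by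
    rw [hF, coeff_map]
    have : (myPoly d e m).coeff 0 = -2 := by
      rw [myPoly_coeff_low d e m 0 (by omega), if_neg (by omega), if_pos rfl]
      ring
    rw [this]
    simp
  have h := hsp.coeff_zero_eq_prod_roots_of_monic hmonic
  have habs : Complex.abs (F.coeff 0) = Complex.abs ((-1)^F.natDegree) * Complex.abs F.roots.prod := by
    rw [h, map_mul]
  rw [hc0] at habs
  have h1 : Complex.abs ((-1 : ℂ)^F.natDegree) = 1 := by
    rw [map_pow]
    simp
  rw [h1, one_mul] at habs
  have h2 : Complex.abs F.roots.prod = (F.roots.map Complex.abs).prod :=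
    map_multiset_prod Complex.abs _
  have h3 : (F.roots.map Complex.abs).prod = ∏ i ∈ Finset.range d, Complex.abs (r i) := by
    rw [hroots, Multiset.map_map, Finset.prod_eq_multiset_prod, Finset.range_val]
    rfl
  rw [h2, h3] at habs
  have : Complex.abs (-2 : ℂ) = 2 := by norm_num
  rw [this] at habs
  exact habs.symm

lemma counting (d J e m : ℕ) (hd : d = J + e) (hJ : 0 < J) (he : 0 < e)
    (hm : (4:ℝ)^d < m) (r : ℕ → ℂ)
    (hroots : ((myPoly d e m).map (Int.castRingHom ℂ)).roots = (Multiset.range d).map r)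
    (hsort : ∀ i j : ℕ, i ≤ j → j < d → Complex.abs (r j) ≤ Complex.abs (r i)) :
    (m:ℝ) * Complex.abs (r J) ^ e < 3 := by
  have hm1 : (1:ℝ) ≤ m := le_of_lt (lt_of_le_of_lt (one_le_pow₀ (by norm_num)) hm)
  have hm0 : (0:ℝ) < m := by linarith
  have hroot : ∀ n, n < d → ((myPoly d e m).map (Int.castRingHom ℂ)).IsRoot (r n) := by
    intro n hn
    apply isRoot_of_mem_roots
    rw [hroots]
    exact Multiset.mem_map.2 ⟨n, Multiset.mem_range.2 hn, rfl⟩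
  set A : ℕ → ℝ := fun i => Complex.abs (r i) with hA
  have hApos : ∀ n, n < d → 0 < A n := fun n hn =>
    root_abs_pos hd hJ he (hroot n hn)
  by_contra hcon
  push_neg at hcon
  -- big roots
  have hbig : ∀ i, i ≤ J → (m:ℝ) < A i ^ J := by
    intro i hi
    have hiJ : i < d := by omega
    have hJd : J < d := by omega
    have hAJ : A J ≤ A i := hsort i J hi hJd
    have h3le : 3 ≤ (m:ℝ) * A i ^ e := by
      calc (3:ℝ) ≤ (m:ℝ) * A J ^ e := hcon
        _ ≤ (m:ℝ) * A i ^ e := by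
            apply mul_le_mul_of_nonneg_left _ hm0.le
            exact pow_le_pow_left₀ (hApos J hJd).le hAJ e
    exact G3 (hApos i hiJ) hm1 (root_h3 hd (hroot i hiJ)) h3le
  have hsmall : ∀ i, i < d → 1 ≤ 2 * (m:ℝ) * A i ^ e := by
    intro i hi
    exact G2 (hApos i hi) hm1 (root_h2 hd (hroot i hi))
  have hprod : ∏ i ∈ Finset.range d, A i = 2 := prod_abs_roots d e m (by omega) he r hroots
  -- split the product
  have hsplit : (∏ i ∈ Finset.range (J+1), A i) * ∏ i ∈ Finset.Ico (J+1) d, A i = 2 := by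
    rw [Finset.prod_range_mul_prod_Ico _ (by omega : J + 1 ≤ d), hprod]
  set P1 := ∏ i ∈ Finset.range (J+1), A i with hP1
  set P2 := ∏ i ∈ Finset.Ico (J+1) d, A i with hP2
  have hP1lb : ((m:ℝ) ^ e) ^ (J+1) ≤ P1 ^ (J * e) := by
    rw [hP1, ← Finset.prod_pow]
    calc ((m:ℝ) ^ e) ^ (J+1) = ∏ _i ∈ Finset.range (J+1), (m:ℝ) ^ e := by
          rw [Finset.prod_const, Finset.card_range]
      _ ≤ ∏ i ∈ Finset.range (J+1), A i ^ (J * e) := ?_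
    apply Finset.prod_le_prod
    · intro i _; positivity
    · intro i hi
      rw [Finset.mem_range] at hi
      have : (m:ℝ) ≤ A i ^ J := (hbig i (by omega)).le
      calc ((m:ℝ)) ^ e ≤ (A i ^ J) ^ e := pow_le_pow_left₀ hm0.le this e
        _ = A i ^ (J * e) := by rw [← pow_mul]
  have hP2lb : (1:ℝ) ≤ (2 * (m:ℝ)) ^ (J * (d - (J+1))) * P2 ^ (J * e) := by
    have h1 : (1:ℝ) ≤ ∏ i ∈ Finset.Ico (J+1) d, ((2 * (m:ℝ)) ^ J * A i ^ (J * e)) := by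
      have := Finset.prod_le_prod (s := Finset.Ico (J+1) d) (f := fun _ => (1:ℝ))
        (g := fun i => (2 * (m:ℝ)) ^ J * A i ^ (J * e)) (by intros; norm_num) ?_
      · simpa using this
      intro i hi
      rw [Finset.mem_Ico] at hi
      have hle := hsmall i hi.2
      calc (1:ℝ) = 1 ^ J := (one_pow J).symm
        _ ≤ (2 * (m:ℝ) * A i ^ e) ^ J := pow_le_pow_left₀ (by norm_num) hle J
        _ = (2 * (m:ℝ)) ^ J * (A i ^ e) ^ J := mul_pow _ _ _
        _ = (2 * (m:ℝ)) ^ J * A i ^ (J * e) := by rw [← pow_mul, mul_comm e J]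
    calc (1:ℝ) ≤ ∏ i ∈ Finset.Ico (J+1) d, ((2 * (m:ℝ)) ^ J * A i ^ (J * e)) := h1
      _ = (2 * (m:ℝ)) ^ (J * (d - (J+1))) * P2 ^ (J * e) := by
          rw [Finset.prod_mul_distrib, Finset.prod_const, Nat.card_Ico, ← pow_mul,
            Finset.prod_pow]
  -- combine
  have hcomb : ((m:ℝ) ^ e) ^ (J+1) * 1 ≤
      P1 ^ (J * e) * ((2 * (m:ℝ)) ^ (J * (d - (J+1))) * P2 ^ (J * e)) := by
    apply mul_le_mul hP1lb hP2lb one_pos.le (by positivity)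
  rw [mul_one] at hcomb
  have hPP : P1 ^ (J * e) * ((2 * (m:ℝ)) ^ (J * (d - (J+1))) * P2 ^ (J * e)) =
      (2 * (m:ℝ)) ^ (J * (e - 1)) * 2 ^ (J * e) := by
    have hcard : d - (J + 1) = e - 1 := by omega
    calc P1 ^ (J * e) * ((2 * (m:ℝ)) ^ (J * (d - (J+1))) * P2 ^ (J * e))
        = (2 * (m:ℝ)) ^ (J * (d - (J+1))) * (P1 * P2) ^ (J * e) := by
          rw [mul_pow]; ring
      _ = (2 * (m:ℝ)) ^ (J * (e - 1)) * 2 ^ (J * e) := by rw [hsplit, hcard]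
  rw [hPP] at hcomb
  -- now m^(e*(J+1)) ≤ 2^(J*(e-1)) * m^(J*(e-1)) * 2^(J*e)
  have hexp1 : ((m:ℝ) ^ e) ^ (J+1) = (m:ℝ) ^ d * (m:ℝ) ^ (J * (e-1)) := by
    rw [← pow_mul, ← pow_add]
    congr 1
    obtain ⟨e', rfl⟩ : ∃ e', e = e' + 1 := ⟨e - 1, by omega⟩
    subst hd
    simp only [Nat.add_sub_cancel]
    ring
  have hq : (0:ℝ) < (m:ℝ) ^ (J * (e-1)) := by positivity
  have hmd : (m:ℝ) ^ d ≤ 2 ^ (J*(e-1) + J*e) := by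
    have h2m : (2*(m:ℝ)) ^ (J*(e-1)) = 2 ^ (J*(e-1)) * (m:ℝ) ^ (J*(e-1)) := mul_pow _ _ _
    rw [hexp1, h2m] at hcomb
    rw [pow_add]
    apply le_of_mul_le_mul_right _ hq
    calc (m:ℝ) ^ d * (m:ℝ) ^ (J*(e-1)) ≤ 2 ^ (J*(e-1)) * (m:ℝ) ^ (J*(e-1)) * 2 ^ (J*e) :=
        hcomb
      _ = 2 ^ (J*(e-1)) * 2 ^ (J*e) * (m:ℝ) ^ (J*(e-1)) := by ring
  have hub : (2:ℝ) ^ (J*(e-1) + J*e) ≤ 2 ^ (2*(d*d)) := by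
    apply pow_le_pow_right₀ (by norm_num)
    have h1 : J ≤ d := by omega
    have h2 : e ≤ d := by omega
    have h3 : e - 1 ≤ d := by omega
    calc J*(e-1) + J*e ≤ d*d + d*d := Nat.add_le_add (Nat.mul_le_mul h1 h3) (Nat.mul_le_mul h1 h2)
      _ = 2*(d*d) := by ring
  have hlb : (2:ℝ) ^ (2*(d*d)) < (m:ℝ) ^ d := by
    have h4 : ((4:ℝ)^d)^d < (m:ℝ)^d := by
      apply pow_lt_pow_left₀ hm (by positivity)
      omega
    have h5 : ((4:ℝ)^d)^d = 2 ^ (2*(d*d)) := by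
      rw [show (4:ℝ) = 2^2 by norm_num, ← pow_mul, ← pow_mul]
    linarith
  linarith
end Count

section Key

lemma key_ineq (k d : ℕ) (hkd : k < d) (c : Fin k → ℝ) (hc0 : ∀ i, 0 ≤ c i)
    (hap : ∀ (p : Polynomial ℤ) (r : ℕ → ℂ), p.Monic → Irreducible p → p.natDegree = d →
      (p.map (Int.castRingHom ℂ)).roots = (Multiset.range d).map r →
      (∀ i j : ℕ, i ≤ j → j < d → Complex.abs (r j) ≤ Complex.abs (r i)) →
      1 ≤ Complex.abs (r 0) * ∏ i : Fin k, Complex.abs (r (i.1 + 1)) ^ c i)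
    (j : Fin k) (m : ℕ) (hm : (4:ℝ)^d < m) :
    (∑ i ∈ Finset.Ici j, c i) * (((j:ℕ):ℝ)+1) * (Real.log m - Real.log 3)
      ≤ (1 + ∑ i ∈ Finset.Iio j, c i) * ((d - ((j:ℕ)+1) : ℕ) : ℝ) * Real.log (2*(m:ℝ)+2) := by
  have hm1 : (1:ℝ) ≤ m := le_of_lt (lt_of_le_of_lt (one_le_pow₀ (by norm_num)) hm)
  have hm0 : (0:ℝ) < m := by linarith
  set J : ℕ := (j:ℕ) + 1 with hJdef
  set E : ℕ := d - J with hEdef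
  have hJk : (j:ℕ) < k := j.2
  have hJd : J < d := by omega
  have hJ : 0 < J := by omega
  have hE : 0 < E := by omega
  have hd : d = J + E := by omega
  have hEd : E < d := by omega
  -- construct polynomial and sorted roots
  have hmonic := myPoly_monic d E m hEd
  have hirr := myPoly_irreducible d E m hEd hE
  have hdeg := myPoly_natDegree d E m hEd
  set F := (myPoly d E m).map (Int.castRingHom ℂ) with hF
  have hFdeg : F.natDegree = d := by
    rw [hF, hmonic.natDegree_map, hdeg]
  have hsp : Splits F := IsAlgClosed.splits F
  have hcard : Multiset.card F.roots = d := by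
    rw [splits_iff_card_roots.1 hsp, hFdeg]
  obtain ⟨r, hroots, hsort⟩ := exists_sorted_listing d F.roots hcard
  have happ := hap (myPoly d E m) r hmonic hirr hdeg hroots hsort
  have hroot : ∀ n, n < d → F.IsRoot (r n) := by
    intro n hn
    apply isRoot_of_mem_roots
    rw [hroots]
    exact Multiset.mem_map.2 ⟨n, Multiset.mem_range.2 hn, rfl⟩
  set A : ℕ → ℝ := fun i => Complex.abs (r i) with hA
  have hApos : ∀ n, n < d → 0 < A n := fun n hn => root_abs_pos hd hJ hE (hroot n hn)
  -- upper bound for all roots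
  have hup : ∀ n, n < d → (J:ℝ) * Real.log (A n) ≤ Real.log (2*(m:ℝ)+2) := by
    intro n hn
    have h1 := G1 (hApos n hn) hm1 (root_h1 hd (hroot n hn))
    rw [← Real.log_pow]
    exact Real.log_le_log (pow_pos (hApos n hn) J) h1
  -- counting: small roots
  have hcnt := counting d J E m hd hJ hE hm r hroots hsort
  have hdown : ∀ i : Fin k, j ≤ i →
      Real.log m + (E:ℝ) * Real.log (A (i.1+1)) ≤ Real.log 3 := by
    intro i hi
    have hn : i.1 + 1 < d := by have := i.2; omega
    have hJn : J ≤ i.1 + 1 := by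
      have : (j:ℕ) ≤ (i:ℕ) := hi
      omega
    have hA1 : A (i.1+1) ≤ A J := hsort J (i.1+1) hJn hn
    have hmain : (m:ℝ) * A (i.1+1) ^ E ≤ 3 := by
      calc (m:ℝ) * A (i.1+1) ^ E ≤ (m:ℝ) * A J ^ E := by
            apply mul_le_mul_of_nonneg_left _ hm0.le
            exact pow_le_pow_left₀ (hApos _ hn).le hA1 E
        _ ≤ 3 := hcnt.le
    have hpos : (0:ℝ) < (m:ℝ) * A (i.1+1) ^ E := by
      have := hApos _ hn; positivity
    have := Real.log_le_log hpos hmain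
    rw [Real.log_mul (by positivity) (by have := hApos _ hn; positivity), Real.log_pow] at this
    linarith
  -- the logarithmic inequality from membership in Ekd
  have hlog : 0 ≤ Real.log (A 0) + ∑ i : Fin k, c i * Real.log (A (i.1+1)) := by
    have h0 : 0 ≤ Real.log (Complex.abs (r 0) * ∏ i : Fin k, Complex.abs (r (i.1 + 1)) ^ c i) :=
      Real.log_nonneg happ
    rw [Real.log_mul (ne_of_gt (hApos 0 (by omega)))
        (ne_of_gt (Finset.prod_pos (fun i _ => Real.rpow_pos_of_pos (hApos _ (by have := i.2; omega)) _))),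
      Real.log_prod (fun i _ => ne_of_gt (Real.rpow_pos_of_pos (hApos _ (by have := i.2; omega)) _))] at h0
    have heq : ∀ i : Fin k, Real.log (Complex.abs (r (i.1 + 1)) ^ c i) = c i * Real.log (A (i.1+1)) := by
      intro i
      exact Real.log_rpow (hApos _ (by have := i.2; omega)) _
    rw [Finset.sum_congr rfl (fun i _ => heq i)] at h0
    exact h0
  set U : ℝ := Real.log (2*(m:ℝ)+2) / J with hU
  set V : ℝ := (Real.log 3 - Real.log m) / E with hV
  have hJR : (0:ℝ) < (J:ℝ) := by exact_mod_cast hJ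
  have hER : (0:ℝ) < (E:ℝ) := by exact_mod_cast hE
  have hUle : ∀ n, n < d → Real.log (A n) ≤ U := by
    intro n hn
    rw [hU, le_div_iff₀ hJR]
    have := hup n hn
    linarith
  have hVle : ∀ i : Fin k, j ≤ i → Real.log (A (i.1+1)) ≤ V := by
    intro i hi
    rw [hV, le_div_iff₀ hER]
    have := hdown i hi
    linarith
  set S1 := ∑ i ∈ Finset.Iio j, c i with hS1
  set S2 := ∑ i ∈ Finset.Ici j, c i with hS2
  have hsum : ∑ i : Fin k, c i * Real.log (A (i.1+1)) ≤ S1 * U + S2 * V := by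
    rw [sum_split j (fun i => c i * Real.log (A (i.1+1))), hS1, hS2,
      Finset.sum_mul, Finset.sum_mul]
    apply add_le_add
    · apply Finset.sum_le_sum
      intro i _
      exact mul_le_mul_of_nonneg_left (hUle (i.1+1) (by have := i.2; omega)) (hc0 i)
    · apply Finset.sum_le_sum
      intro i hi
      exact mul_le_mul_of_nonneg_left (hVle i (Finset.mem_Ici.1 hi)) (hc0 i)
  have hfin : 0 ≤ (1 + S1) * U + S2 * V := by
    have h0U := hUle 0 (by omega)
    have := hlog
    nlinarith [hsum, h0U]
  have hUJ : U * (J:ℝ) = Real.log (2*(m:ℝ)+2) := div_mul_cancel₀ _ (ne_of_gt hJR)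
  have hVE : V * (E:ℝ) = Real.log 3 - Real.log m := div_mul_cancel₀ _ (ne_of_gt hER)
  have h2 : 0 ≤ ((1 + S1) * U + S2 * V) * ((J:ℝ) * (E:ℝ)) :=
    mul_nonneg hfin (by positivity)
  have h3 : ((1 + S1) * U + S2 * V) * ((J:ℝ) * (E:ℝ))
      = (1 + S1) * (E:ℝ) * (U * (J:ℝ)) + S2 * (J:ℝ) * (V * (E:ℝ)) := by ring
  rw [h3, hUJ, hVE] at h2
  have hJcast : ((J:ℕ):ℝ) = ((j:ℕ):ℝ) + 1 := by rw [hJdef]; push_cast; ring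
  rw [hJcast] at h2
  have hEcast : ((d - ((j:ℕ)+1) : ℕ) : ℝ) = (E:ℝ) := by rw [hEdef, hJdef]
  rw [hEcast]
  linarith

end Key

/-- If `(c_1,…,c_k) ∈ E_{k,d}` (with `d > k ≥ 1`), then for every
`1 ≤ j ≤ k` (written as `j : Fin k` representing the index `j+1`) we have
`(d-j)/j + ((d-j)/j)(c_1 + ⋯ + c_{j-1}) - (c_j + ⋯ + c_k) ≥ 0`. -/
theorem Ekd_linear_inequalities (k d : ℕ) (hk : 0 < k) (hkd : k < d)
    (c : Fin k → ℝ) (hc : c ∈ Ekd k d) :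
    ∀ j : Fin k,
      0 ≤ ((d : ℝ) - (((j : ℕ) : ℝ) + 1)) / (((j : ℕ) : ℝ) + 1)
          + ((d : ℝ) - (((j : ℕ) : ℝ) + 1)) / (((j : ℕ) : ℝ) + 1)
            * (∑ i ∈ Finset.Iio j, c i)
          - ∑ i ∈ Finset.Ici j, c i := by
  obtain ⟨hc0, hc2⟩ := hc
  intro j
  have hap : ∀ (p : Polynomial ℤ) (r : ℕ → ℂ), p.Monic → Irreducible p → p.natDegree = d →
      (p.map (Int.castRingHom ℂ)).roots = (Multiset.range d).map r →
      (∀ i j : ℕ, i ≤ j → j < d → Complex.abs (r j) ≤ Complex.abs (r i)) →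
      1 ≤ Complex.abs (r 0) * ∏ i : Fin k, Complex.abs (r (i.1 + 1)) ^ c i := by
    intro p r h1 h2 h3 h4 h5
    exact hc2 p r h1 h2 h3 ⟨h4, h5⟩
  set S1 := ∑ i ∈ Finset.Iio j, c i with hS1
  set S2 := ∑ i ∈ Finset.Ici j, c i with hS2
  have hS1n : 0 ≤ S1 := Finset.sum_nonneg fun i _ => hc0 i
  have hS2n : 0 ≤ S2 := Finset.sum_nonneg fun i _ => hc0 i
  set JR : ℝ := ((j:ℕ):ℝ) + 1 with hJR
  have hJRpos : 0 < JR := by positivity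
  have hjd : (j:ℕ) + 1 < d := by have := j.2; omega
  set ER : ℝ := ((d - ((j:ℕ)+1) : ℕ) : ℝ) with hER
  have hERpos : 0 < ER := by
    rw [hER]
    have : 0 < d - ((j:ℕ)+1) := by omega
    exact_mod_cast this
  have hdE : (d:ℝ) - (((j:ℕ):ℝ) + 1) = ER := by
    rw [hER]
    push_cast [Nat.cast_sub (le_of_lt hjd)]
    ring
  rw [hdE]
  -- suffices: S2 * JR ≤ (1 + S1) * ER
  suffices h : S2 * JR ≤ (1 + S1) * ER by
    have heq : ER / JR + ER / JR * S1 - S2 = ((1 + S1) * ER - S2 * JR) / JR := by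
      field_simp
    rw [heq]
    apply div_nonneg _ hJRpos.le
    linarith
  by_contra hcon
  push_neg at hcon
  set t : ℝ := S2 * JR - (1 + S1) * ER with ht
  have htpos : 0 < t := by rw [ht]; linarith
  set Cst : ℝ := (1 + S1) * ER * Real.log 4 + S2 * JR * Real.log 3 with hCst
  obtain ⟨m, hm⟩ := exists_nat_gt (max ((4:ℝ)^d) (Real.exp (Cst / t)))
  have hm4 : (4:ℝ)^d < m := lt_of_le_of_lt (le_max_left _ _) hm
  have hm1 : (1:ℝ) ≤ m := le_of_lt (lt_of_le_of_lt (one_le_pow₀ (by norm_num)) hm4)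
  have hm0 : (0:ℝ) < m := by linarith
  have hkey := key_ineq k d hkd c hc0 hap j m hm4
  rw [← hS1, ← hS2, ← hJR, ← hER] at hkey
  have hlog42 : Real.log (2*(m:ℝ)+2) ≤ Real.log 4 + Real.log m := by
    have h1 : Real.log (2*(m:ℝ)+2) ≤ Real.log (4*(m:ℝ)) :=
      Real.log_le_log (by linarith) (by linarith)
    have h2 : Real.log (4*(m:ℝ)) = Real.log 4 + Real.log m :=
      Real.log_mul (by norm_num) (by linarith)
    linarith
  have hAE : 0 ≤ (1 + S1) * ER := by positivity
  have hfinal : t * Real.log m ≤ Cst := by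
    have h5 : (1 + S1) * ER * Real.log (2*(m:ℝ)+2)
        ≤ (1 + S1) * ER * (Real.log 4 + Real.log m) :=
      mul_le_mul_of_nonneg_left hlog42 hAE
    rw [ht, hCst]
    nlinarith [hkey, h5]
  have hmexp : Real.exp (Cst / t) < m := lt_of_le_of_lt (le_max_right _ _) hm
  have hlogm : Cst / t < Real.log m := (Real.lt_log_iff_exp_lt hm0).2 hmexp
  have : Cst < t * Real.log m := by
    rw [div_lt_iff₀ htpos] at hlogm
    linarith
  linarith
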